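/- Let X be an R^d-valued random variable with E[X] = g, E[‖X−g‖^p] ≤ σ^p for p ∈ (1,2], σ ≥ 0, and let D be a random symmetric positive definite matrix (possibly dependent on X) with m·I ⪯ D ⪯ M·I for deterministic 0 < m ≤ M. Suppose ‖g‖ < τ/(2M) and define X̂ = min{1, τ/‖D X‖}·X. Then E[‖X̂ − E[X̂]‖²] ≤ [9M^p/m² + (3/(2m))^{2−p}]·τ^{2−p}·σ^p. -/

import Mathlib

open MeasureTheory Matrix
open scoped ENNReal NNReal RealInnerProductSpace

section MatrixLemmas
variable {d : ℕ}

lemma pcvb_quad_nonneg (B : Matrix (Fin d) (Fin d) ℝ) (hB : B.PosSemidef)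
    (x : EuclideanSpace ℝ (Fin d)) :
    0 ≤ ⟪x, Matrix.toEuclideanLin B x⟫ := by
  have := hB.dotProduct_mulVec_nonneg (x : Fin d → ℝ)
  simpa [PiLp.inner_apply, Matrix.toEuclideanLin_apply, dotProduct, mul_comm] using this

lemma pcvb_lower_bound {m : ℝ} (A : Matrix (Fin d) (Fin d) ℝ)
    (hA : (A - m • (1 : Matrix (Fin d) (Fin d) ℝ)).PosSemidef) (x : EuclideanSpace ℝ (Fin d)) :
    m * ‖x‖ ≤ ‖Matrix.toEuclideanLin A x‖ := by
  have h0 := pcvb_quad_nonneg _ hA x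
  have he : ⟪x, Matrix.toEuclideanLin (A - m • (1 : Matrix (Fin d) (Fin d) ℝ)) x⟫
      = ⟪x, Matrix.toEuclideanLin A x⟫ - m * ‖x‖ ^ 2 := by
    rw [map_sub, _root_.map_smul]
    have h1 : Matrix.toEuclideanLin (1 : Matrix (Fin d) (Fin d) ℝ) x = x := by
      simp [Matrix.toEuclideanLin_apply]
    rw [LinearMap.sub_apply, inner_sub_right, LinearMap.smul_apply, inner_smul_right, h1,
      real_inner_self_eq_norm_sq]
  have h1 : m * ‖x‖ ^ 2 ≤ ⟪x, Matrix.toEuclideanLin A x⟫ := by linarith [he ▸ h0]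
  have h2 : ⟪x, Matrix.toEuclideanLin A x⟫ ≤ ‖x‖ * ‖Matrix.toEuclideanLin A x‖ :=
    real_inner_le_norm _ _
  rcases eq_or_lt_of_le (norm_nonneg x) with h | h
  · simp [← h]
  · have := h1.trans h2
    rw [pow_two] at this
    nlinarith

open scoped MatrixOrder in
lemma pcvb_upper_bound {M : ℝ} (hM : 0 ≤ M) (A : Matrix (Fin d) (Fin d) ℝ) (hA : A.PosSemidef)
    (hup : ((M • (1 : Matrix (Fin d) (Fin d) ℝ)) - A).PosSemidef) (x : EuclideanSpace ℝ (Fin d)) :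
    ‖Matrix.toEuclideanLin A x‖ ≤ M * ‖x‖ := by
  set S := CFC.sqrt A with hS
  have hSherm : Sᴴ = S := (CFC.sqrt_nonneg A).posSemidef.1
  have hSS : S * S = A := CFC.sqrt_mul_sqrt_self A hA.nonneg
  have hSA : S * A = A * S := by rw [← hSS, mul_assoc]
  have key : (M • A - A * A).PosSemidef := by
    have h := hup.conjTranspose_mul_mul_same S
    rw [hSherm] at h
    have : S * (M • (1 : Matrix (Fin d) (Fin d) ℝ) - A) * S = M • A - A * A := by
      rw [Matrix.mul_sub, Matrix.sub_mul, Matrix.mul_smul, mul_one, Matrix.smul_mul, hSS,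
        mul_assoc, ← hSA, ← mul_assoc, hSS]
    rwa [this] at h
  set T := Matrix.toEuclideanLin A
  have hsymm : T.IsSymmetric := (Matrix.isHermitian_iff_isSymmetric).mp hA.1
  have hTT : ∀ y : EuclideanSpace ℝ (Fin d), Matrix.toEuclideanLin (A * A) y = T (T y) := by
    intro y
    simp [T, Matrix.toEuclideanLin_apply, Matrix.mulVec_mulVec]
  have h1 : ⟪T x, T x⟫ ≤ M * ⟪x, T x⟫ := by
    have h0 := pcvb_quad_nonneg _ key x
    rw [map_sub, _root_.map_smul] at h0
    rw [LinearMap.sub_apply, inner_sub_right, LinearMap.smul_apply, inner_smul_right, hTT] at h0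
    nlinarith [hsymm x (T x)]
  have h2 : ⟪x, T x⟫ ≤ M * ‖x‖ ^ 2 := by
    have h0 := pcvb_quad_nonneg _ hup x
    rw [map_sub, _root_.map_smul] at h0
    have h1' : Matrix.toEuclideanLin (1 : Matrix (Fin d) (Fin d) ℝ) x = x := by
      simp [Matrix.toEuclideanLin_apply]
    rw [LinearMap.sub_apply, inner_sub_right, LinearMap.smul_apply, inner_smul_right, h1',
      real_inner_self_eq_norm_sq] at h0
    linarith
  have h3 : ‖T x‖ ^ 2 ≤ (M * ‖x‖) ^ 2 := by
    rw [← real_inner_self_eq_norm_sq]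
    calc ⟪T x, T x⟫ ≤ M * ⟪x, T x⟫ := h1
    _ ≤ M * (M * ‖x‖ ^ 2) := by nlinarith
    _ = (M * ‖x‖) ^ 2 := by ring
  exact (pow_le_pow_iff_left₀ (norm_nonneg _) (by positivity) two_ne_zero).mp h3

end MatrixLemmas

set_option maxHeartbeats 1000000 in
/-- Variance bound for preconditioning-then-clipping. -/
theorem precond_clip_variance_bound
    {Ω : Type*} [m0 : MeasurableSpace Ω] (μ : Measure Ω) [IsProbabilityMeasure μ]
    (d : ℕ) (p σ τ m M : ℝ) (hp1 : 1 < p) (hp2 : p ≤ 2) (hσ : 0 ≤ σ) (hτ : 0 < τ)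
    (hm : 0 < m) (hmM : m ≤ M)
    (X : Ω → EuclideanSpace ℝ (Fin d))
    (hXmeas : AEStronglyMeasurable X μ) (hXint : Integrable X μ)
    (g : EuclideanSpace ℝ (Fin d)) (hmean : ∫ ω, X ω ∂μ = g)
    (hmom : ∫⁻ ω, (‖X ω - g‖₊ : ℝ≥0∞) ^ p ∂μ ≤ ENNReal.ofReal (σ ^ p))
    (D : Ω → Matrix (Fin d) (Fin d) ℝ)
    (hDpos : ∀ ω, (D ω).PosDef)
    (hDlow : ∀ ω, (D ω - m • (1 : Matrix (Fin d) (Fin d) ℝ)).PosSemidef)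
    (hDup : ∀ ω, ((M • (1 : Matrix (Fin d) (Fin d) ℝ)) - D ω).PosSemidef)
    (hg : ‖g‖ < τ / (2 * M))
    (Xhat : Ω → EuclideanSpace ℝ (Fin d))
    (hXhat : ∀ ω, Xhat ω = min 1 (τ / ‖Matrix.toEuclideanLin (D ω) (X ω)‖) • X ω)
    (hXhatmeas : AEStronglyMeasurable Xhat μ) :
    ∫ ω, ‖Xhat ω - ∫ ω', Xhat ω' ∂μ‖ ^ 2 ∂μ
      ≤ (9 * M ^ p / m ^ 2 + (3 / (2 * m)) ^ (2 - p)) * τ ^ (2 - p) * σ ^ p := by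
  have hM : 0 < M := lt_of_lt_of_le hm hmM
  have hp0 : 0 < p := lt_trans one_pos hp1
  have h2p : 0 ≤ 2 - p := by linarith
  -- operator bounds
  have hlow : ∀ ω (x : EuclideanSpace ℝ (Fin d)),
      m * ‖x‖ ≤ ‖Matrix.toEuclideanLin (D ω) x‖ := fun ω x => pcvb_lower_bound _ (hDlow ω) x
  have hupp : ∀ ω (x : EuclideanSpace ℝ (Fin d)),
      ‖Matrix.toEuclideanLin (D ω) x‖ ≤ M * ‖x‖ :=
    fun ω x => pcvb_upper_bound hM.le _ (hDpos ω).posSemidef (hDup ω) x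
  have hgm : ‖g‖ ≤ τ / (2 * m) := by
    refine hg.le.trans ?_
    gcongr
  -- (a) uniform bound on Xhat
  have hYb : ∀ ω, ‖Xhat ω‖ ≤ τ / m := by
    intro ω
    rw [hXhat ω, norm_smul]
    set t := ‖Matrix.toEuclideanLin (D ω) (X ω)‖ with ht
    have htn : 0 ≤ t := norm_nonneg _
    have hc0 : 0 ≤ min 1 (τ / t) := le_min one_pos.le (div_nonneg hτ.le htn)
    rw [Real.norm_eq_abs, abs_of_nonneg hc0]
    by_cases hx : ‖X ω‖ ≤ τ / m
    · calc min 1 (τ / t) * ‖X ω‖ ≤ 1 * ‖X ω‖ := by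
            exact mul_le_mul_of_nonneg_right (min_le_left _ _) (norm_nonneg _)
      _ ≤ τ / m := by simpa using hx
    · push_neg at hx
      have hxpos : 0 < ‖X ω‖ := lt_trans (by positivity) hx
      have htpos : 0 < t := lt_of_lt_of_le (by positivity) (hlow ω (X ω))
      calc min 1 (τ / t) * ‖X ω‖ ≤ (τ / t) * ‖X ω‖ :=
            mul_le_mul_of_nonneg_right (min_le_right _ _) (norm_nonneg _)
      _ ≤ (τ / (m * ‖X ω‖)) * ‖X ω‖ := by
            refine mul_le_mul_of_nonneg_right ?_ (norm_nonneg _)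
            exact div_le_div_of_nonneg_left hτ.le (by positivity) (hlow ω (X ω))
      _ = τ / m := by field_simp
  -- constant
  set K : ℝ := 3 * τ / (2 * m) with hK
  have hKpos : 0 < K := by positivity
  set C : ℝ := K ^ (2 - p) + (9 * τ ^ 2 / (4 * m ^ 2)) * (2 * M / τ) ^ p with hC
  -- (b) key pointwise bound
  have key : ∀ ω, ‖Xhat ω - g‖ ^ 2 ≤ C * ‖X ω - g‖ ^ p := by
    intro ω
    set t := ‖Matrix.toEuclideanLin (D ω) (X ω)‖ with ht
    set r := ‖X ω - g‖ with hr
    have hrn : 0 ≤ r := norm_nonneg _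
    have hT1 : 0 ≤ (9 * τ ^ 2 / (4 * m ^ 2)) * (2 * M / τ) ^ p := by positivity
    by_cases hcase : t ≤ τ
    · -- unclipped
      have hXeq : Xhat ω = X ω := by
        rw [hXhat ω]
        by_cases hx0 : X ω = 0
        · simp [hx0]
        · have hxpos : 0 < ‖X ω‖ := norm_pos_iff.mpr hx0
          have htpos : 0 < t := lt_of_lt_of_le (by positivity) (hlow ω (X ω))
          have : (1 : ℝ) ≤ τ / t := (one_le_div htpos).mpr hcase
          rw [min_eq_left this, one_smul]
      rw [hXeq]
      have hxb : ‖X ω‖ ≤ τ / m := by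
        rw [le_div_iff₀ hm]
        nlinarith [hlow ω (X ω)]
      have hrK : r ≤ K := by
        calc r ≤ ‖X ω‖ + ‖g‖ := norm_sub_le _ _
        _ ≤ τ / m + τ / (2 * m) := add_le_add hxb hgm
        _ = K := by rw [hK]; field_simp; ring
      rcases eq_or_lt_of_le hrn with h0 | h0
      · rw [← hr, ← h0, Real.zero_rpow (ne_of_gt hp0), mul_zero]
        norm_num
      · have hsplit : r ^ 2 = r ^ (2 - p) * r ^ p := by
          rw [← Real.rpow_natCast r 2, ← Real.rpow_add h0]
          congr 1
          push_cast
          ring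
        have h1 : r ^ (2 - p) ≤ K ^ (2 - p) := Real.rpow_le_rpow hrn hrK h2p
        have h2 : (0:ℝ) ≤ r ^ p := Real.rpow_nonneg hrn p
        calc r ^ 2 = r ^ (2 - p) * r ^ p := hsplit
        _ ≤ K ^ (2 - p) * r ^ p := mul_le_mul_of_nonneg_right h1 h2
        _ ≤ C * r ^ p := by
            rw [hC, add_mul]
            exact le_add_of_nonneg_right (mul_nonneg hT1 h2)
    · -- clipped
      push_neg at hcase
      have hYK : ‖Xhat ω - g‖ ≤ K := by
        calc ‖Xhat ω - g‖ ≤ ‖Xhat ω‖ + ‖g‖ := norm_sub_le _ _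
        _ ≤ τ / m + τ / (2 * m) := add_le_add (hYb ω) hgm
        _ = K := by rw [hK]; field_simp; ring
      -- r > τ / (2 M)
      have hTg : ‖Matrix.toEuclideanLin (D ω) g‖ < τ / 2 := by
        calc ‖Matrix.toEuclideanLin (D ω) g‖ ≤ M * ‖g‖ := hupp ω g
        _ < M * (τ / (2 * M)) := by gcongr
        _ = τ / 2 := by field_simp
      have hTr : τ / 2 < ‖Matrix.toEuclideanLin (D ω) (X ω - g)‖ := by
        have h1 : ‖Matrix.toEuclideanLin (D ω) (X ω)‖
            ≤ ‖Matrix.toEuclideanLin (D ω) (X ω - g)‖ + ‖Matrix.toEuclideanLin (D ω) g‖ := by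
          have : Matrix.toEuclideanLin (D ω) (X ω)
              = Matrix.toEuclideanLin (D ω) (X ω - g) + Matrix.toEuclideanLin (D ω) g := by
            rw [← map_add]; congr 1; abel
          rw [this]; exact norm_add_le _ _
        linarith
      have hrlow : τ / (2 * M) < r := by
        have h1 := hupp ω (X ω - g)
        have : τ / 2 < M * r := lt_of_lt_of_le hTr h1
        rw [div_lt_iff₀ (by positivity)]
        rw [div_lt_iff₀ (by norm_num : (0:ℝ) < 2)] at this
        nlinarith
      have hone : 1 ≤ (2 * M / τ) ^ p * r ^ p := by
        have hb : (0:ℝ) ≤ τ / (2 * M) := by positivity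
        have h1 : (τ / (2 * M)) ^ p ≤ r ^ p := Real.rpow_le_rpow hb hrlow.le hp0.le
        have h2 : (2 * M / τ) ^ p * (τ / (2 * M)) ^ p = 1 := by
          rw [← Real.mul_rpow (by positivity) hb]
          rw [show (2 * M / τ) * (τ / (2 * M)) = 1 by field_simp]
          exact Real.one_rpow p
        calc (1:ℝ) = (2 * M / τ) ^ p * (τ / (2 * M)) ^ p := h2.symm
        _ ≤ (2 * M / τ) ^ p * r ^ p := by
            have : (0:ℝ) ≤ (2 * M / τ) ^ p := Real.rpow_nonneg (by positivity) p
            exact mul_le_mul_of_nonneg_left h1 this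
      have hsq : ‖Xhat ω - g‖ ^ 2 ≤ K ^ 2 :=
        pow_le_pow_left₀ (norm_nonneg _) hYK 2
      have hK2 : K ^ 2 = 9 * τ ^ 2 / (4 * m ^ 2) := by
        rw [hK]; field_simp; ring
      have hKp : (0:ℝ) ≤ K ^ (2 - p) * r ^ p :=
        mul_nonneg (Real.rpow_nonneg hKpos.le _) (Real.rpow_nonneg hrn _)
      calc ‖Xhat ω - g‖ ^ 2 ≤ K ^ 2 := hsq
      _ = (9 * τ ^ 2 / (4 * m ^ 2)) * 1 := by rw [hK2]; ring
      _ ≤ (9 * τ ^ 2 / (4 * m ^ 2)) * ((2 * M / τ) ^ p * r ^ p) := by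
          exact mul_le_mul_of_nonneg_left hone (by positivity)
      _ ≤ C * r ^ p := by
          rw [hC, add_mul, ← mul_assoc]
          exact le_add_of_nonneg_left hKp
  -- integrability of ‖X - g‖^p
  have hXgmeas : AEStronglyMeasurable (fun ω => ‖X ω - g‖) μ :=
    (hXmeas.sub aestronglyMeasurable_const).norm
  have hhmeas : AEStronglyMeasurable (fun ω => ‖X ω - g‖ ^ p) μ :=
    (hXgmeas.aemeasurable.pow_const p).aestronglyMeasurable
  have hofReal : ∀ ω : Ω, ENNReal.ofReal (‖X ω - g‖ ^ p) = (‖X ω - g‖₊ : ℝ≥0∞) ^ p := by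
    intro ω
    rw [← ENNReal.ofReal_rpow_of_nonneg (norm_nonneg _) hp0.le, ofReal_norm, enorm_eq_nnnorm]
  have hhint : Integrable (fun ω => ‖X ω - g‖ ^ p) μ := by
    refine ⟨hhmeas, ?_⟩
    rw [HasFiniteIntegral]
    calc ∫⁻ ω, ‖ ‖X ω - g‖ ^ p ‖₊ ∂μ = ∫⁻ ω, (‖X ω - g‖₊ : ℝ≥0∞) ^ p ∂μ := by
          refine lintegral_congr fun ω => ?_
          rw [← hofReal ω, ← enorm_eq_nnnorm, Real.enorm_eq_ofReal (Real.rpow_nonneg (norm_nonneg _) p)]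
    _ ≤ ENNReal.ofReal (σ ^ p) := hmom
    _ < ⊤ := ENNReal.ofReal_lt_top
  have hintle : ∫ ω, ‖X ω - g‖ ^ p ∂μ ≤ σ ^ p := by
    rw [integral_eq_lintegral_of_nonneg_ae
      (ae_of_all _ fun ω => Real.rpow_nonneg (norm_nonneg _) p) hhmeas]
    have h1 : ∫⁻ ω, ENNReal.ofReal (‖X ω - g‖ ^ p) ∂μ ≤ ENNReal.ofReal (σ ^ p) := by
      calc ∫⁻ ω, ENNReal.ofReal (‖X ω - g‖ ^ p) ∂μ = ∫⁻ ω, (‖X ω - g‖₊ : ℝ≥0∞) ^ p ∂μ :=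
            lintegral_congr fun ω => hofReal ω
      _ ≤ ENNReal.ofReal (σ ^ p) := hmom
    calc (∫⁻ ω, ENNReal.ofReal (‖X ω - g‖ ^ p) ∂μ).toReal
        ≤ (ENNReal.ofReal (σ ^ p)).toReal := ENNReal.toReal_mono ENNReal.ofReal_ne_top h1
    _ = σ ^ p := ENNReal.toReal_ofReal (Real.rpow_nonneg hσ p)
  -- Xhat integrable
  have hYint : Integrable Xhat μ :=
    (integrable_const (τ / m)).mono' hXhatmeas (Filter.Eventually.of_forall hYb)
  set gY : EuclideanSpace ℝ (Fin d) := ∫ ω', Xhat ω' ∂μ with hgY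
  -- variance inequality
  have hZint : Integrable (fun ω => Xhat ω - gY) μ := hYint.sub (integrable_const _)
  have hZmean : ∫ ω, (Xhat ω - gY) ∂μ = 0 := by
    rw [integral_sub hYint (integrable_const _), integral_const]
    simp [hgY]
  have hf1meas : AEStronglyMeasurable (fun ω => ‖Xhat ω - gY‖ ^ 2) μ :=
    (((hXhatmeas.sub aestronglyMeasurable_const).norm.aemeasurable.pow_const
      2).aestronglyMeasurable)
  have hf1int : Integrable (fun ω => ‖Xhat ω - gY‖ ^ 2) μ := by
    refine (integrable_const ((τ / m + ‖gY‖) ^ 2)).mono' hf1meas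
      (Filter.Eventually.of_forall fun ω => ?_)
    rw [Real.norm_eq_abs, abs_of_nonneg (by positivity)]
    refine pow_le_pow_left₀ (norm_nonneg _) ?_ 2
    exact (norm_sub_le _ _).trans (add_le_add_left (hYb ω) _)
  have hf2int : Integrable (fun ω => 2 * ⟪gY - g, Xhat ω - gY⟫) μ :=
    (hZint.const_inner (gY - g)).const_mul 2
  have hexp : ∀ ω, ‖Xhat ω - g‖ ^ 2
      = ‖Xhat ω - gY‖ ^ 2 + 2 * ⟪gY - g, Xhat ω - gY⟫ + ‖gY - g‖ ^ 2 := by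
    intro ω
    have h : Xhat ω - g = (Xhat ω - gY) + (gY - g) := by abel
    rw [h, norm_add_sq_real, real_inner_comm]
  have hvar : ∫ ω, ‖Xhat ω - gY‖ ^ 2 ∂μ ≤ ∫ ω, ‖Xhat ω - g‖ ^ 2 ∂μ := by
    have hI : ∫ ω, ‖Xhat ω - g‖ ^ 2 ∂μ
        = (∫ ω, ‖Xhat ω - gY‖ ^ 2 ∂μ + ∫ ω, 2 * ⟪gY - g, Xhat ω - gY⟫ ∂μ) + ‖gY - g‖ ^ 2 := by
      rw [integral_congr_ae (Filter.Eventually.of_forall fun ω => hexp ω)]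
      rw [integral_add (f := fun ω => ‖Xhat ω - gY‖ ^ 2 + 2 * ⟪gY - g, Xhat ω - gY⟫)
          (g := fun _ => ‖gY - g‖ ^ 2) (hf1int.add hf2int) (integrable_const _),
        integral_add (f := fun ω => ‖Xhat ω - gY‖ ^ 2)
          (g := fun ω => 2 * ⟪gY - g, Xhat ω - gY⟫) hf1int hf2int, integral_const]
      simp
    have hmid : ∫ ω, 2 * ⟪gY - g, Xhat ω - gY⟫ ∂μ = 0 := by
      rw [integral_const_mul, integral_inner hZint, hZmean, inner_zero_right, mul_zero]
    rw [hI, hmid]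
    nlinarith [sq_nonneg ‖gY - g‖]
  -- constants
  have hC0 : 0 ≤ C := add_nonneg (Real.rpow_nonneg hKpos.le _) (by positivity)
  have hchain : ∫ ω, ‖Xhat ω - g‖ ^ 2 ∂μ ≤ C * σ ^ p := by
    have h1 : ∫ ω, ‖Xhat ω - g‖ ^ 2 ∂μ ≤ ∫ ω, C * ‖X ω - g‖ ^ p ∂μ :=
      integral_mono_of_nonneg (Filter.Eventually.of_forall fun ω => by positivity)
        (hhint.const_mul C) (Filter.Eventually.of_forall key)
    rw [integral_const_mul] at h1
    exact h1.trans (mul_le_mul_of_nonneg_left hintle hC0)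
  have hτp : 0 < τ ^ p := Real.rpow_pos_of_pos hτ p
  have hMp : 0 ≤ M ^ p := Real.rpow_nonneg hM.le p
  have e1 : K ^ (2 - p) = (3 / (2 * m)) ^ (2 - p) * τ ^ (2 - p) := by
    rw [hK, show 3 * τ / (2 * m) = 3 / (2 * m) * τ by ring,
      Real.mul_rpow (by positivity) hτ.le]
  have e2 : (2 * M / τ) ^ p = 2 ^ p * M ^ p / τ ^ p := by
    rw [Real.div_rpow (by positivity) hτ.le, Real.mul_rpow (by norm_num) hM.le]
  have e6 : τ ^ (2 - p) = τ ^ 2 / τ ^ p := by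
    rw [Real.rpow_sub hτ]
    congr 1
    rw [show (2:ℝ) = ((2:ℕ):ℝ) from by norm_num, Real.rpow_natCast]
  have e5 : (2:ℝ) ^ p ≤ 4 := by
    have h := Real.rpow_le_rpow_of_exponent_le (by norm_num : (1:ℝ) ≤ 2) hp2
    rwa [show (2:ℝ) ^ (2:ℝ) = 4 from by
      rw [show (2:ℝ) ^ (2:ℝ) = (2:ℝ) ^ ((2:ℕ):ℝ) from by norm_num, Real.rpow_natCast]
      norm_num] at h
  have hconst : C ≤ (9 * M ^ p / m ^ 2 + (3 / (2 * m)) ^ (2 - p)) * τ ^ (2 - p) := by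
    have hT : 9 * τ ^ 2 / (4 * m ^ 2) * (2 * M / τ) ^ p ≤ 9 * M ^ p / m ^ 2 * τ ^ (2 - p) := by
      rw [e2, e6, div_mul_div_comm, div_mul_div_comm,
        div_le_div_iff₀ (by positivity) (by positivity)]
      nlinarith [mul_le_mul_of_nonneg_right e5
        (by positivity : (0:ℝ) ≤ 9 * τ ^ 2 * M ^ p * (m ^ 2 * τ ^ p)), hτp, hMp,
        sq_nonneg τ, sq_nonneg m]
    rw [hC, e1, add_mul]
    linarith
  exact hvar.trans (hchain.trans (mul_le_mul_of_nonneg_right hconst (Real.rpow_nonneg hσ p)))
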